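/- For every finite simple graph G = (V, E) with nonempty vertex set, δ_loc(G) ≤ min(⌊|V|/2⌋, rank(A)), where A is the adjacency matrix of G with entries in the two-element field F₂ and rank(A) is its rank over F₂. -/

import Mathlib

open SimpleGraph

variable {V : Type*}

/-- Local complementation of `G` at the vertex `v`: adjacency among the
neighbors of `v` is complemented, i.e. the edge set is `E Δ K_v`. -/
def localComp (G : SimpleGraph V) (v : V) : SimpleGraph V where
  Adj u w := u ≠ w ∧ ¬ (G.Adj u w ↔ (G.Adj v u ∧ G.Adj v w))
  symm := by
    constructor
    intro u w h
    refine ⟨h.1.symm, ?_⟩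
    have h1 := G.adj_comm u w
    have h2 := h.2
    tauto
  loopless := by
    constructor
    intro u h
    exact h.1 rfl

/-- The minimal vertex degree `δ(G)` of a graph. -/
noncomputable def minDegree (G : SimpleGraph V) : ℕ :=
  sInf (Set.range fun v => (G.neighborSet v).ncard)

/-- The minimal degree under local complementation `δ_loc(G)`: the minimum of
`δ(G')` over all graphs `G'` obtainable from `G` by a finite sequence of
local complementations. -/
noncomputable def minDegreeLoc (G : SimpleGraph V) : ℕ :=
  sInf {n | ∃ l : List V, minDegree (l.foldl localComp G) = n}

/-- `D` is an evenly seen set if every vertex outside `D` has an even number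
of neighbors in `D`. -/
def EvenlySeen (G : SimpleGraph V) (D : Set V) : Prop :=
  ∀ u ∉ D, Even ((G.neighborSet u ∩ D).ncard)

/-- A nonempty set `K` is `d`-locally evenly seen if there is a set `D` with
`K ⊆ D ⊆ V` and `|D| = d` such that every vertex outside `D` has an even
number of neighbors in `K`. -/
def LocallyEvenlySeen (G : SimpleGraph V) (d : ℕ) (K : Set V) : Prop :=
  K.Nonempty ∧ ∃ D : Set V, K ⊆ D ∧ D.ncard = d ∧
    ∀ u ∉ D, Even ((G.neighborSet u ∩ K).ncard)

/-! ### Auxiliary machinery -/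

open Classical in
/-- Adjacency matrix over `F₂`. -/
noncomputable def adjM (G : SimpleGraph V) : Matrix V V (ZMod 2) :=
  Matrix.of fun u w => if G.Adj u w then 1 else 0

lemma adjM_symm (G : SimpleGraph V) (u w : V) : adjM G u w = adjM G w u := by
  classical
  by_cases h : G.Adj u w
  · have h' : G.Adj w u := h.symm
    simp [adjM, h, h']
  · have h' : ¬ G.Adj w u := fun hh => h hh.symm
    simp [adjM, h, h']

lemma adjM_diag (G : SimpleGraph V) (v : V) : adjM G v v = 0 := by
  simp [adjM]

lemma adjM_ne_zero {G : SimpleGraph V} {u w : V} (h : adjM G u w ≠ 0) : G.Adj u w := by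
  classical
  by_contra hc
  simp [adjM, hc] at h

lemma adjM_of_adj {G : SimpleGraph V} {u w : V} (h : G.Adj u w) : adjM G u w = 1 := by
  classical
  simp [adjM, h]

section FT
variable [Fintype V] [DecidableEq V]

open Matrix

lemma localComp_adj (G : SimpleGraph V) (t u w : V) :
    (localComp G t).Adj u w ↔ u ≠ w ∧ ¬ (G.Adj u w ↔ (G.Adj t u ∧ G.Adj t w)) :=
  Iff.rfl

lemma adjM_localComp (G : SimpleGraph V) (t u w : V) :
    adjM (localComp G t) u w
      = adjM G u w + adjM G t u * adjM G t w + (if u = w then adjM G t u else 0) := by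
  classical
  rcases eq_or_ne u w with rfl | huw
  · have h1 : adjM (localComp G t) u u = 0 := adjM_diag _ u
    have h2 : adjM G u u = 0 := adjM_diag G u
    rw [h1, h2, if_pos rfl]
    have : ∀ a : ZMod 2, (0 : ZMod 2) = 0 + a * a + a := by decide
    exact this _
  · rw [if_neg huw]
    by_cases hP : G.Adj u w <;> by_cases hQ : G.Adj t u <;> by_cases hR : G.Adj t w <;>
      simp [adjM, localComp_adj, huw, hP, hQ, hR] <;> decide

lemma mulVec_adjM_localComp (G : SimpleGraph V) (t : V) (y : V → ZMod 2) (u : V) :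
    (adjM (localComp G t) *ᵥ y) u
      = (adjM G *ᵥ y) u + adjM G t u * ((adjM G *ᵥ y) t + y u) := by
  classical
  simp only [Matrix.mulVec, dotProduct]
  have key : ∀ w, adjM (localComp G t) u w * y w
      = adjM G u w * y w + adjM G t u * (adjM G t w * y w)
        + (if u = w then adjM G t u * y w else 0) := by
    intro w
    rw [adjM_localComp]
    rcases eq_or_ne u w with rfl | h
    · rw [if_pos rfl, if_pos rfl]; ring
    · rw [if_neg h, if_neg h]; ring
  rw [Finset.sum_congr rfl fun w _ => key w, Finset.sum_add_distrib, Finset.sum_add_distrib,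
    ← Finset.mul_sum, Finset.sum_ite_eq Finset.univ u (fun w => adjM G t u * y w)]
  simp [mul_add, add_assoc]

lemma mulVec_e (A : Matrix V V (ZMod 2)) (t : V) (u : V) :
    (A *ᵥ fun v => if v = t then (1 : ZMod 2) else 0) u = A u t := by
  classical
  simp only [Matrix.mulVec, dotProduct, mul_ite, mul_one, mul_zero]
  rw [Finset.sum_ite_eq' Finset.univ t (fun w => A u w)]
  simp

lemma _root_.minDegree_le (G : SimpleGraph V) (v : V) : _root_.minDegree G ≤ (G.neighborSet v).ncard :=
  Nat.sInf_le ⟨v, rfl⟩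

lemma _root_.minDegree_lt_of_nbhd_subset (G : SimpleGraph V) (v : V) (D : Finset V)
    (hv : v ∈ D) (h : ∀ w, adjM G v w ≠ 0 → w ∈ D) : _root_.minDegree G < D.card := by
  refine lt_of_le_of_lt (_root_.minDegree_le G v) ?_
  have hsub : G.neighborSet v ⊆ ↑(D.erase v) := by
    intro w hw
    have hadj : G.Adj v w := hw
    have hne : adjM G v w ≠ 0 := by rw [adjM_of_adj hadj]; exact one_ne_zero
    exact Finset.mem_coe.mpr (Finset.mem_erase.mpr ⟨(G.ne_of_adj hadj).symm, h w hne⟩)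
  calc (G.neighborSet v).ncard ≤ (↑(D.erase v) : Set V).ncard :=
        Set.ncard_le_ncard hsub (Set.toFinite _)
    _ = (D.erase v).card := Set.ncard_coe_finset _
    _ < D.card := Finset.card_erase_lt_of_mem hv

lemma main_lemma :
    ∀ (n : ℕ) (G : SimpleGraph V) (x : V → ZMod 2) (D : Finset V),
      x ≠ 0 → (∀ v, x v ≠ 0 → v ∈ D) → (∀ u, u ∉ D → (adjM G *ᵥ x) u = 0) →
      (Finset.univ.filter fun v => x v ≠ 0).card ≤ n →
      ∃ l : List V, _root_.minDegree (l.foldl localComp G) < D.card := by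
  intro n
  induction n with
  | zero =>
    intro G x D hx hsub heven hcard
    exfalso
    obtain ⟨v, hv⟩ := Function.ne_iff.mp hx
    have hv0 : x v ≠ 0 := hv
    have hmem : v ∈ Finset.univ.filter fun v => x v ≠ 0 := by simp [hv0]
    have := Finset.card_pos.mpr ⟨v, hmem⟩
    omega
  | succ n ih =>
    intro G x D hx hsub heven hcard
    by_cases hbase : ∃ v, x v ≠ 0 ∧ ∀ w, adjM G v w ≠ 0 → w ∈ D
    · obtain ⟨v, hv, hnb⟩ := hbase
      exact ⟨[], _root_.minDegree_lt_of_nbhd_subset G v D (hsub v hv) hnb⟩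
    push_neg at hbase
    have one : ∀ a : ZMod 2, a ≠ 0 → a = 1 := by decide
    have hxzero : ∀ u, u ∉ D → x u = 0 := by
      intro u hu
      by_contra h
      exact hu (hsub u h)
    have hpair : ∀ t, x t ≠ 0 → ∃ u, u ≠ t ∧ x u ≠ 0 := by
      intro t ht
      by_contra hcon
      push_neg at hcon
      obtain ⟨w, hw, hwD⟩ := hbase t ht
      have hsum : (adjM G *ᵥ x) w = adjM G w t * x t := by
        simp only [Matrix.mulVec, dotProduct]
        refine Finset.sum_eq_single t (fun b _ hb => by rw [hcon b hb, mul_zero]) ?_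
        exact fun h => absurd (Finset.mem_univ t) h
      rw [heven w hwD] at hsum
      have h1 : adjM G w t = 1 := by rw [adjM_symm]; exact one _ hw
      rw [h1, one_mul, one _ ht] at hsum
      exact absurd hsum (by decide)
    have step1 : ∃ (l1 : List V) (t : V), x t ≠ 0 ∧
        (∀ u, u ∉ D → (adjM (l1.foldl localComp G) *ᵥ x) u = 0) ∧
        (adjM (l1.foldl localComp G) *ᵥ x) t = 1 := by
      by_cases h1 : ∃ t, x t ≠ 0 ∧ (adjM G *ᵥ x) t ≠ 0
      · obtain ⟨t, ht, ht2⟩ := h1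
        exact ⟨[], t, ht, heven, one _ ht2⟩
      · push_neg at h1
        obtain ⟨v, hv'⟩ := Function.ne_iff.mp hx
        have hv : x v ≠ 0 := hv'
        obtain ⟨w, hvw, hwD⟩ := hbase v hv
        refine ⟨[w], v, hv, ?_, ?_⟩
        · intro u hu
          simp only [List.foldl_cons, List.foldl_nil]
          rw [mulVec_adjM_localComp, heven u hu, heven w hwD, hxzero u hu]
          ring
        · simp only [List.foldl_cons, List.foldl_nil]
          rw [mulVec_adjM_localComp, h1 v hv, heven w hwD]
          have hwv : adjM G w v = 1 := by rw [adjM_symm]; exact one _ hvw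
          rw [hwv, one _ hv]
          ring
    obtain ⟨l1, t, hxt, heven1, hodd⟩ := step1
    set G1 := l1.foldl localComp G with hG1
    set x' : V → ZMod 2 := fun v => x v + (if v = t then 1 else 0) with hx'def
    have hx't : x' t = 0 := by
      simp only [hx'def, if_pos rfl]
      rw [one _ hxt]; decide
    have hx'ne : ∀ v, v ≠ t → x' v = x v := by
      intro v hv; simp [hx'def, hv]
    have hmv : ∀ u, (adjM G1 *ᵥ x') u = (adjM G1 *ᵥ x) u + adjM G1 u t := by
      intro u
      have hxx : x' = x + fun v => if v = t then 1 else 0 := rfl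
      rw [hxx, Matrix.mulVec_add]
      simp [mulVec_e]
    have heven2 : ∀ u, u ∉ D → (adjM (localComp G1 t) *ᵥ x') u = 0 := by
      intro u hu
      have hut : u ≠ t := fun h => hu (h ▸ hsub t hxt)
      rw [mulVec_adjM_localComp]
      have e1 : (adjM G1 *ᵥ x') u = adjM G1 u t := by
        rw [hmv u, heven1 u hu, zero_add]
      have e2 : (adjM G1 *ᵥ x') t = 1 := by
        rw [hmv t, hodd, adjM_diag, add_zero]
      have e3 : x' u = 0 := by rw [hx'ne u hut, hxzero u hu]
      rw [e1, e2, e3, add_zero, mul_one, adjM_symm G1 u t, CharTwo.add_self_eq_zero]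
    have hx'0 : x' ≠ 0 := by
      obtain ⟨u, hut, hu⟩ := hpair t hxt
      intro h0
      have := congrFun h0 u
      rw [hx'ne u hut] at this
      exact hu this
    have hsub' : ∀ v, x' v ≠ 0 → v ∈ D := by
      intro v hv
      rcases eq_or_ne v t with rfl | h
      · exact absurd hx't hv
      · exact hsub v (by rwa [hx'ne v h] at hv)
    have hcard' : (Finset.univ.filter fun v => x' v ≠ 0).card ≤ n := by
      have hset : (Finset.univ.filter fun v => x' v ≠ 0)
          = (Finset.univ.filter fun v => x v ≠ 0).erase t := by
        ext v
        simp only [Finset.mem_filter, Finset.mem_erase, Finset.mem_univ, true_and]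
        constructor
        · intro hv
          have hvt : v ≠ t := fun h => hv (h ▸ hx't)
          exact ⟨hvt, by rwa [hx'ne v hvt] at hv⟩
        · rintro ⟨hvt, hv⟩
          rwa [hx'ne v hvt]
      rw [hset, Finset.card_erase_of_mem (by simp [hxt])]
      omega
    obtain ⟨l, hl⟩ := ih (localComp G1 t) x' D hx'0 hsub' heven2 hcard'
    refine ⟨l1 ++ t :: l, ?_⟩
    rw [List.foldl_append]
    simpa using hl

/-- Extension by zero as a linear map. -/
noncomputable def extendZero (D : Finset V) :
    ({v : V // v ∈ D} → ZMod 2) →ₗ[ZMod 2] (V → ZMod 2) where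
  toFun y v := if h : v ∈ D then y ⟨v, h⟩ else 0
  map_add' y z := by funext v; by_cases h : v ∈ D <;> simp [h]
  map_smul' c y := by funext v; by_cases h : v ∈ D <;> simp [h]

lemma exists_ker_vec (A : Matrix V V (ZMod 2)) (D : Finset V)
    (hD : 2 * (Fintype.card V - D.card) < Fintype.card V) (hD' : D.card ≤ Fintype.card V) :
    ∃ x : V → ZMod 2, x ≠ 0 ∧ (∀ v, x v ≠ 0 → v ∈ D) ∧ ∀ u, u ∉ D → (A *ᵥ x) u = 0 := by
  classical
  set f : (V → ZMod 2) →ₗ[ZMod 2]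
      ({ v : V // v ∉ D } → ZMod 2) × ({ v : V // v ∉ D } → ZMod 2) :=
    LinearMap.prod (LinearMap.funLeft (ZMod 2) (ZMod 2) Subtype.val)
      ((LinearMap.funLeft (ZMod 2) (ZMod 2) Subtype.val).comp A.mulVecLin) with hf
  have hc : Fintype.card {v : V // v ∉ D} = Fintype.card V - D.card := by
    rw [Fintype.card_subtype_compl]
    congr 1
    simp [Fintype.card_coe]
  have hni : ¬ Function.Injective f := by
    intro hinj
    have hle := LinearMap.finrank_le_finrank_of_injective hinj
    rw [Module.finrank_pi, Module.finrank_prod, Module.finrank_pi, hc] at hle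
    omega
  have hker : LinearMap.ker f ≠ ⊥ := fun h => hni (LinearMap.ker_eq_bot.mp h)
  obtain ⟨x, hxker, hx0⟩ := Submodule.exists_mem_ne_zero_of_ne_bot hker
  have hfx : f x = 0 := LinearMap.mem_ker.mp hxker
  rw [hf] at hfx
  have hfst := congrArg Prod.fst hfx
  have hsnd := congrArg Prod.snd hfx
  simp only [LinearMap.prod_apply, Pi.prod, LinearMap.coe_comp, Function.comp_apply,
    Prod.fst_zero, Prod.snd_zero] at hfst hsnd
  refine ⟨x, hx0, ?_, ?_⟩
  · intro v hv
    by_contra hvD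
    exact hv (congrFun hfst ⟨v, hvD⟩)
  · intro u hu
    have := congrFun hsnd ⟨u, hu⟩
    simpa [Matrix.mulVecLin_apply] using this

lemma exists_ker_vec' (A : Matrix V V (ZMod 2)) (D : Finset V) (hD : A.rank < D.card) :
    ∃ x : V → ZMod 2, x ≠ 0 ∧ (∀ v, x v ≠ 0 → v ∈ D) ∧ A *ᵥ x = 0 := by
  classical
  by_contra hcon
  push_neg at hcon
  set g := A.mulVecLin.comp (extendZero D) with hg
  have hinj : Function.Injective g := by
    rw [← LinearMap.ker_eq_bot, LinearMap.ker_eq_bot']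
    intro y hy
    by_contra hy0
    have hx0 : extendZero D y ≠ 0 := by
      obtain ⟨u, hu⟩ := Function.ne_iff.mp hy0
      intro h
      have h2 := congrFun h u.val
      have h3 : extendZero (V := V) D y u.val = y u := by
        simp only [extendZero, LinearMap.coe_mk, AddHom.coe_mk]
        rw [dif_pos u.prop]
      rw [h3] at h2
      exact hu h2
    have hsupp : ∀ v, extendZero D y v ≠ 0 → v ∈ D := by
      intro v hv
      by_contra hvD
      apply hv
      simp only [extendZero, LinearMap.coe_mk, AddHom.coe_mk]
      rw [dif_neg hvD]
    have hAx : A *ᵥ extendZero D y = 0 := by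
      have := hy
      rw [hg] at this
      simpa [Matrix.mulVecLin_apply] using this
    exact hcon (extendZero D y) hx0 hsupp hAx
  have h1 : D.card ≤ A.rank := by
    have hcc : Fintype.card {v : V // v ∈ D} = D.card := by
      simp [Fintype.card_coe]
    calc D.card = Module.finrank (ZMod 2) ({v : V // v ∈ D} → ZMod 2) := by
          rw [Module.finrank_pi, hcc]
      _ = Module.finrank (ZMod 2) (LinearMap.range g) :=
          (LinearMap.finrank_range_of_inj hinj).symm
      _ ≤ Module.finrank (ZMod 2) (LinearMap.range A.mulVecLin) :=
          Submodule.finrank_mono (by rw [hg]; exact LinearMap.range_comp_le_range _ _)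
      _ = A.rank := rfl
  omega

lemma _root_.minDegreeLoc_le_foldl (G : SimpleGraph V) (l : List V) :
    _root_.minDegreeLoc G ≤ _root_.minDegree (l.foldl localComp G) :=
  Nat.sInf_le ⟨l, rfl⟩

end FT

/-- `δ_loc(G) ≤ min(⌊|V|/2⌋, rank(A))` where `A` is the
adjacency matrix of `G` over the field `F₂`. -/
theorem statement_10 [Fintype V] [DecidableEq V] [Nonempty V] (G : SimpleGraph V)
    [DecidableRel G.Adj] :
    minDegreeLoc G ≤ min (Fintype.card V / 2)
      (Matrix.rank (Matrix.of fun u w : V => if G.Adj u w then (1 : ZMod 2) else 0)) := by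
  classical
  have hA : (Matrix.of fun u w : V => if G.Adj u w then (1 : ZMod 2) else 0) = adjM G := by
    funext u w
    by_cases h : G.Adj u w <;> simp [adjM, h]
  rw [hA]
  have hn1 : 1 ≤ Fintype.card V := Fintype.card_pos
  refine le_min ?_ ?_
  · obtain ⟨D, -, hDcard⟩ := Finset.exists_subset_card_eq (s := (Finset.univ : Finset V))
      (n := Fintype.card V / 2 + 1) (by rw [Finset.card_univ]; omega)
    have hD' : D.card ≤ Fintype.card V := by
      rw [← Finset.card_univ]; exact Finset.card_le_card (Finset.subset_univ D)
    obtain ⟨x, hx0, hsub, heven⟩ := exists_ker_vec (adjM G) D (by rw [hDcard]; omega) hD'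
    obtain ⟨l, hl⟩ := main_lemma _ G x D hx0 hsub heven le_rfl
    have h2 := _root_.minDegreeLoc_le_foldl G l
    rw [hDcard] at hl
    omega
  · rcases lt_or_ge ((adjM G).rank) (Fintype.card V) with h | h
    · obtain ⟨D, -, hDcard⟩ := Finset.exists_subset_card_eq (s := (Finset.univ : Finset V))
        (n := (adjM G).rank + 1) (by rw [Finset.card_univ]; omega)
      obtain ⟨x, hx0, hsub, hker⟩ := exists_ker_vec' (adjM G) D (by omega)
      obtain ⟨l, hl⟩ := main_lemma _ G x D hx0 hsub (fun u _ => congrFun hker u) le_rfl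
      have h2 := _root_.minDegreeLoc_le_foldl G l
      omega
    · obtain ⟨v⟩ := ‹Nonempty V›
      have hlt : _root_.minDegree G < (Finset.univ : Finset V).card :=
        _root_.minDegree_lt_of_nbhd_subset G v Finset.univ (Finset.mem_univ v)
          (fun w _ => Finset.mem_univ w)
      rw [Finset.card_univ] at hlt
      have h2 := _root_.minDegreeLoc_le_foldl G ([] : List V)
      simp only [List.foldl_nil] at h2
      omega
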